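/- Let d, ℓ, t' be positive integers with t' ≥ 4ℓ²d. Let G be a finite bipartite graph with parts A and B that is K_{d,d}-free. Let S' ⊆ A with |S'| = ℓ and |N(S')| ≥ t'·(1 − 1/(4ℓ)). Let H ⊆ A be a set of ℓ(d−1)(ℓ²)^{d−1} + 1 highest-degree vertices of A, i.e., |H| = ℓ(d−1)(ℓ²)^{d−1} + 1 and deg(h) ≥ deg(a) for every h ∈ H and every a ∈ A \ H. Then for every S ⊆ A with |S| = ℓ and |N(S)| ≥ t', either S ∩ H ≠ ∅, or there exists a vertex x ∈ H such that |N(S' ∪ {x})| ≥ t'. -/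

import Mathlib

open Finset

open scoped Classical

lemma stmt8_choose (d X n M₀ : ℕ) (h : n ^ d ≤ X * (M₀ + 1 - d) ^ d) :
    n.choose d ≤ X * M₀.choose d := by
  have h1 := Nat.descFactorial_eq_factorial_mul_choose n d
  have h2 := Nat.descFactorial_eq_factorial_mul_choose M₀ d
  have h5 : d.factorial * n.choose d ≤ d.factorial * (X * M₀.choose d) := by
    calc d.factorial * n.choose d = n.descFactorial d := h1.symm
      _ ≤ n ^ d := Nat.descFactorial_le_pow n d
      _ ≤ X * (M₀ + 1 - d) ^ d := h
      _ ≤ X * M₀.descFactorial d :=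
          Nat.mul_le_mul_left X (Nat.pow_sub_le_descFactorial M₀ d)
      _ = d.factorial * (X * M₀.choose d) := by rw [h2]; ring
  exact Nat.le_of_mul_le_mul_left h5 d.factorial_pos

lemma stmt8_real (d : ℕ) (hd : 2 ≤ d) (L D T M N : ℝ)
    (hDd : D = (d : ℝ)) (hL2 : 2 ≤ L)
    (hT : 4 * L ^ 2 * D ≤ T)
    (hM : 3 * T + 4 * L ≤ 4 * L * M)
    (hN0 : 0 ≤ N) (hNT : N ≤ T) :
    N ^ d ≤ L * (L ^ 2) ^ (d - 1) * (M + 1 - D) ^ d := by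
  have hD2 : (2 : ℝ) ≤ D := by rw [hDd]; exact_mod_cast hd
  have hL0 : (0 : ℝ) < L := by linarith
  have hD0 : (0 : ℝ) < D := by linarith
  have hT0 : (0 : ℝ) < T := by nlinarith
  set x : ℝ := M + 1 - D with hxdef
  show N ^ d ≤ L * (L ^ 2) ^ (d - 1) * x ^ d
  -- inequality (I)
  have hI : ((3 * L - 1) * D + 2) * T ≤ 4 * L ^ 2 * D * x := by
    nlinarith [mul_nonneg (mul_nonneg hL0.le hD0.le) (by linarith : (0:ℝ) ≤ 4*L*M - 3*T - 4*L),
      mul_nonneg (by linarith : (0:ℝ) ≤ D - 2) (by linarith : (0:ℝ) ≤ T - 4*L^2*D)]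
  have hx0 : 0 < x := by nlinarith
  have hc0 : (0:ℝ) ≤ (3 * L - 1) * D + 2 := by nlinarith
  -- Bernoulli step
  have hBern : L * (4 * D) ^ d ≤ (4 * D + 4 * (L - 1)) ^ d := by
    obtain ⟨u, hu0, huD⟩ : ∃ u : ℝ, 0 ≤ u ∧ D * u = L - 1 :=
      ⟨(L - 1) / D, div_nonneg (by linarith) hD0.le, by field_simp⟩
    have h1 : 1 + (d : ℝ) * u ≤ (1 + u) ^ d := one_add_mul_le_pow (by linarith) d
    rw [← hDd] at h1
    have hLle : L ≤ (1 + u) ^ d := by rw [huD] at h1; linarith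
    have h3 : 4 * D + 4 * (L - 1) = (4 * D) * (1 + u) := by rw [← huD]; ring
    calc L * (4 * D) ^ d ≤ (1 + u) ^ d * (4 * D) ^ d :=
          mul_le_mul_of_nonneg_right hLle (by positivity)
      _ = ((4 * D) * (1 + u)) ^ d := by rw [← mul_pow]; ring
      _ = (4 * D + 4 * (L - 1)) ^ d := by rw [h3]
  have hlin : 4 * D + 4 * (L - 1) ≤ (3 * L - 1) * D + 2 := by
    nlinarith [mul_nonneg (by linarith : (0:ℝ) ≤ L - 2) (by linarith : (0:ℝ) ≤ D - 2)]
  have hII : (4 * L ^ 2 * D) ^ d ≤ L * (L ^ 2) ^ (d - 1) * ((3 * L - 1) * D + 2) ^ d := by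
    have hstep : L * (4 * D) ^ d ≤ ((3 * L - 1) * D + 2) ^ d :=
      hBern.trans (pow_le_pow_left₀ (by nlinarith) hlin d)
    have hdd : d - 1 + 1 = d := by omega
    have hsplit : (L ^ 2) ^ d = (L ^ 2) ^ (d - 1) * L ^ 2 := by
      rw [← pow_succ, hdd]
    calc (4 * L ^ 2 * D) ^ d = (L ^ 2) ^ d * (4 * D) ^ d := by
          rw [← mul_pow]; ring_nf
      _ = (L ^ 2) ^ (d - 1) * L * (L * (4 * D) ^ d) := by rw [hsplit]; ring
      _ ≤ (L ^ 2) ^ (d - 1) * L * (((3 * L - 1) * D + 2) ^ d) :=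
          mul_le_mul_of_nonneg_left hstep (by positivity)
      _ = L * (L ^ 2) ^ (d - 1) * ((3 * L - 1) * D + 2) ^ d := by ring
  -- combine
  have hmain : (4 * L ^ 2 * D) ^ d * N ^ d ≤
      (4 * L ^ 2 * D) ^ d * (L * (L ^ 2) ^ (d - 1) * x ^ d) := by
    calc (4 * L ^ 2 * D) ^ d * N ^ d ≤ (4 * L ^ 2 * D) ^ d * T ^ d :=
          mul_le_mul_of_nonneg_left (pow_le_pow_left₀ hN0 hNT d) (by positivity)
      _ ≤ (L * (L ^ 2) ^ (d - 1) * ((3 * L - 1) * D + 2) ^ d) * T ^ d :=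
          mul_le_mul_of_nonneg_right hII (by positivity)
      _ = L * (L ^ 2) ^ (d - 1) * (((3 * L - 1) * D + 2) * T) ^ d := by
          rw [mul_pow]; ring
      _ ≤ L * (L ^ 2) ^ (d - 1) * ((4 * L ^ 2 * D) * x) ^ d := by
          apply mul_le_mul_of_nonneg_left _ (by positivity)
          exact pow_le_pow_left₀ (by positivity) hI d
      _ = (4 * L ^ 2 * D) ^ d * (L * (L ^ 2) ^ (d - 1) * x ^ d) := by
          rw [mul_pow]; ring
  exact le_of_mul_le_mul_left hmain (by positivity)

/-- Jain et al. style augmentation lemma for `K_{d,d}`-free bipartite graphs. -/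
theorem stmt_8 {A B : Type*} [Fintype A] [Fintype B] [DecidableEq A]
    (d ℓ t' : ℕ) (hd : 0 < d) (hℓ : 0 < ℓ) (ht'pos : 0 < t')
    (ht' : 4 * ℓ ^ 2 * d ≤ t')
    (Adj : A → B → Prop)
    (hKdd : ¬ ∃ (S : Finset A) (T : Finset B), S.card = d ∧ T.card = d ∧
      ∀ a ∈ S, ∀ b ∈ T, Adj a b)
    (S' : Finset A) (hS' : S'.card = ℓ)
    (hcov : (t' : ℝ) * (1 - 1 / (4 * (ℓ : ℝ))) ≤
      ((univ.filter fun b => ∃ a ∈ S', Adj a b).card : ℝ))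
    (H : Finset A) (hHcard : H.card = ℓ * (d - 1) * (ℓ ^ 2) ^ (d - 1) + 1)
    (hHdeg : ∀ h ∈ H, ∀ a : A, a ∉ H →
      (univ.filter fun b => Adj a b).card ≤ (univ.filter fun b => Adj h b).card) :
    ∀ S : Finset A, S.card = ℓ → t' ≤ (univ.filter fun b => ∃ a ∈ S, Adj a b).card →
      (S ∩ H).Nonempty ∨
        ∃ x ∈ H, t' ≤ (univ.filter fun b => ∃ a ∈ insert x S', Adj a b).card := by
  classical
  intro S hScard hScov
  by_cases hSH : (S ∩ H).Nonempty
  · exact Or.inl hSH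
  right
  have hSnotH : ∀ a ∈ S, a ∉ H := fun a ha hah =>
    hSH ⟨a, Finset.mem_inter.mpr ⟨ha, hah⟩⟩
  set Nb : A → Finset B := fun a => univ.filter fun b => Adj a b with hNbdef
  set NS' : Finset B := univ.filter (fun b => ∃ a ∈ S', Adj a b) with hNS'def
  set n : ℕ := NS'.card with hndef
  have hHne : H.Nonempty := Finset.card_pos.mp (by rw [hHcard]; omega)
  have hSne : S.Nonempty := Finset.card_pos.mp (by rw [hScard]; exact hℓ)
  obtain ⟨s, hsS, hsmax⟩ := Finset.exists_max_image S (fun a => (Nb a).card) hSne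
  have hts : t' ≤ ℓ * (Nb s).card := by
    have hsub : (univ.filter fun b => ∃ a ∈ S, Adj a b) ⊆ S.biUnion Nb := by
      intro b hb
      simp only [Finset.mem_filter, Finset.mem_univ, true_and] at hb
      obtain ⟨a, haS, hab⟩ := hb
      exact Finset.mem_biUnion.mpr ⟨a, haS, by
        simp only [hNbdef, Finset.mem_filter, Finset.mem_univ, true_and]; exact hab⟩
    calc t' ≤ (univ.filter fun b => ∃ a ∈ S, Adj a b).card := hScov
      _ ≤ (S.biUnion Nb).card := Finset.card_le_card hsub
      _ ≤ ∑ a ∈ S, (Nb a).card := Finset.card_biUnion_le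
      _ ≤ S.card * (Nb s).card :=
          Finset.sum_le_card_nsmul _ _ _ (fun a ha => hsmax a ha)
      _ = ℓ * (Nb s).card := by rw [hScard]
  have hdegH : ∀ h ∈ H, t' ≤ ℓ * (Nb h).card := by
    intro h hh
    have h1 : (Nb s).card ≤ (Nb h).card := hHdeg h hh s (hSnotH s hsS)
    exact hts.trans (Nat.mul_le_mul_left ℓ h1)
  rcases eq_or_lt_of_le (Nat.succ_le_of_lt hℓ : 1 ≤ ℓ) with hℓ1 | hℓ2
  · -- case ℓ = 1 : any h ∈ H works directly
    obtain ⟨h, hh⟩ := hHne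
    refine ⟨h, hh, ?_⟩
    have h1 : t' ≤ (Nb h).card := by
      have := hdegH h hh; rw [← hℓ1] at this; simpa using this
    refine h1.trans (Finset.card_le_card ?_)
    intro b hb
    simp only [hNbdef, Finset.mem_filter, Finset.mem_univ, true_and] at hb ⊢
    exact ⟨h, Finset.mem_insert_self _ _, hb⟩
  -- main case ℓ ≥ 2
  by_contra hcon
  push_neg at hcon
  set m : A → ℕ := fun h => (Nb h ∩ NS').card with hmdef
  have hunion : ∀ h : A,
      (univ.filter fun b => ∃ a ∈ insert h S', Adj a b) = Nb h ∪ NS' := by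
    intro h
    ext b
    simp only [Finset.mem_filter, Finset.mem_univ, true_and, Finset.mem_union,
      hNbdef, hNS'def, Finset.mem_insert]
    constructor
    · rintro ⟨a, (rfl | ha), hab⟩
      · exact Or.inl hab
      · exact Or.inr ⟨a, ha, hab⟩
    · rintro (hb | ⟨a, ha, hab⟩)
      · exact ⟨h, Or.inl rfl, hb⟩
      · exact ⟨a, Or.inr ha, hab⟩
  have hm : ∀ h ∈ H, (Nb h).card + n + 1 ≤ m h + t' := by
    intro h hh
    have h1 : (Nb h ∪ NS').card + 1 ≤ t' := by
      have := hcon h hh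
      rw [hunion h] at this
      omega
    have h2 := Finset.card_union_add_card_inter (Nb h) NS'
    simp only [hmdef, hndef] at *
    omega
  have hnt : n < t' := by
    obtain ⟨h, hh⟩ := hHne
    have := hcon h hh
    rw [hunion h] at this
    exact lt_of_le_of_lt (Finset.card_le_card Finset.subset_union_right) this
  -- real lower bound on each m h
  have hl0 : (0 : ℝ) < (ℓ : ℝ) := by exact_mod_cast hℓ
  have hl1 : (1 : ℝ) ≤ (ℓ : ℝ) := by exact_mod_cast hℓ
  have hcovn : (t' : ℝ) * (4 * ℓ - 1) ≤ 4 * ℓ * n := by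
    have he : (t' : ℝ) * (1 - 1 / (4 * (ℓ : ℝ))) * (4 * ℓ) = t' * (4 * ℓ - 1) := by
      field_simp
    nlinarith [hcov]
  have hmreal : ∀ h ∈ H, 3 * (t' : ℝ) + 4 * ℓ ≤ 4 * ℓ * (m h) := by
    intro h hh
    have h1 : ((Nb h).card : ℝ) + n + 1 ≤ m h + t' := by exact_mod_cast hm h hh
    have h2 : (t' : ℝ) ≤ ℓ * (Nb h).card := by exact_mod_cast hdegH h hh
    nlinarith
  obtain ⟨h₀, h₀H, hmin⟩ := Finset.exists_min_image H m hHne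
  set M₀ : ℕ := m h₀ with hM₀def
  have hM₀real : 3 * (t' : ℝ) + 4 * ℓ ≤ 4 * ℓ * M₀ := hmreal h₀ h₀H
  have ht'R : 4 * (ℓ : ℝ) ^ 2 * d ≤ (t' : ℝ) := by exact_mod_cast ht'
  have hdR : (1 : ℝ) ≤ (d : ℝ) := by exact_mod_cast hd
  have hdM₀ : d ≤ M₀ := by
    have hd0R : (0 : ℝ) ≤ (d : ℝ) := by positivity
    have h4 : 4 * (ℓ : ℝ) * d ≤ 4 * (ℓ : ℝ) * M₀ := by
      nlinarith [mul_nonneg (mul_nonneg hl0.le hd0R) (by linarith : (0:ℝ) ≤ 3 * (ℓ:ℝ) - 1)]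
    have h5 : (d : ℝ) ≤ (M₀ : ℝ) := le_of_mul_le_mul_left h4 (by positivity)
    exact_mod_cast h5
  -- double counting
  set 𝒯 : Finset (Finset B) := NS'.powersetCard d with h𝒯def
  have hFh : ∀ h : A, (𝒯.filter fun T => T ⊆ Nb h).card = (m h).choose d := by
    intro h
    have he : 𝒯.filter (fun T => T ⊆ Nb h) = (Nb h ∩ NS').powersetCard d := by
      ext T
      simp only [Finset.mem_filter, h𝒯def, Finset.mem_powersetCard,
        Finset.subset_inter_iff]
      tauto
    rw [he, Finset.card_powersetCard]
  have hbound : ∀ T ∈ 𝒯, (H.filter fun h => T ⊆ Nb h).card ≤ d - 1 := by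
    intro T hT
    by_contra hc
    push_neg at hc
    obtain ⟨H₀, hsub, hcard⟩ :=
      Finset.exists_subset_card_eq (s := H.filter fun h => T ⊆ Nb h) (n := d) (by omega)
    refine hKdd ⟨H₀, T, hcard, (Finset.mem_powersetCard.mp (by
      simpa only [h𝒯def] using hT)).2, ?_⟩
    intro a ha b hb
    have h2 : b ∈ Nb a := (Finset.mem_filter.mp (hsub ha)).2 hb
    simpa only [hNbdef, Finset.mem_filter, Finset.mem_univ, true_and] using h2
  have hswap : ∑ h ∈ H, (𝒯.filter fun T => T ⊆ Nb h).card
      = ∑ T ∈ 𝒯, (H.filter fun h => T ⊆ Nb h).card := by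
    simp_rw [Finset.card_filter]
    exact Finset.sum_comm
  have hDC : H.card * M₀.choose d ≤ n.choose d * (d - 1) := by
    calc H.card * M₀.choose d = H.card • M₀.choose d := by rw [smul_eq_mul]
      _ ≤ ∑ h ∈ H, (m h).choose d :=
          Finset.card_nsmul_le_sum H _ _ (fun h hh => Nat.choose_le_choose d (hmin h hh))
      _ = ∑ h ∈ H, (𝒯.filter fun T => T ⊆ Nb h).card := by
          refine Finset.sum_congr rfl fun h _ => (hFh h).symm
      _ = ∑ T ∈ 𝒯, (H.filter fun h => T ⊆ Nb h).card := hswap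
      _ ≤ ∑ _T ∈ 𝒯, (d - 1) := Finset.sum_le_sum hbound
      _ = 𝒯.card * (d - 1) := by rw [Finset.sum_const, smul_eq_mul]
      _ = n.choose d * (d - 1) := by rw [h𝒯def, Finset.card_powersetCard]
  have hchoose_pos : 0 < M₀.choose d := Nat.choose_pos hdM₀
  have hHpos : 0 < H.card := Finset.card_pos.mpr hHne
  rcases Nat.lt_or_ge d 2 with hd1 | hd2
  · -- d = 1
    have hd1' : d = 1 := by omega
    rw [hd1'] at hDC
    simp only [Nat.sub_self, Nat.mul_zero] at hDC
    have := Nat.mul_pos hHpos (hd1' ▸ hchoose_pos)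
    omega
  · -- d ≥ 2
    have hℓ2 : 2 ≤ ℓ := hℓ2
    have hNat : n ^ d ≤ ℓ * (ℓ ^ 2) ^ (d - 1) * (M₀ + 1 - d) ^ d := by
      have hcast : ((M₀ + 1 - d : ℕ) : ℝ) = (M₀ : ℝ) + 1 - (d : ℝ) := by
        have hle : d ≤ M₀ + 1 := hdM₀.trans (Nat.le_succ _)
        push_cast [hle]
        ring
      have hR : (n : ℝ) ^ d ≤ (ℓ : ℝ) * ((ℓ : ℝ) ^ 2) ^ (d - 1) *
          ((M₀ : ℝ) + 1 - (d : ℝ)) ^ d :=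
        stmt8_real d hd2 (ℓ : ℝ) (d : ℝ) (t' : ℝ) (M₀ : ℝ) (n : ℝ) rfl
          (by exact_mod_cast hℓ2) ht'R hM₀real (by positivity)
          (by exact_mod_cast hnt.le)
      rw [← hcast] at hR
      exact_mod_cast hR
    have hkey : n.choose d ≤ ℓ * (ℓ ^ 2) ^ (d - 1) * M₀.choose d :=
      stmt8_choose d (ℓ * (ℓ ^ 2) ^ (d - 1)) n M₀ hNat
    have h3 : n.choose d * (d - 1) + 1 ≤ H.card * M₀.choose d := by
      rw [hHcard]
      calc n.choose d * (d - 1) + 1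
          ≤ (d - 1) * (ℓ * (ℓ ^ 2) ^ (d - 1) * M₀.choose d) + M₀.choose d := by
            have h4 := Nat.mul_le_mul_left (d - 1) hkey
            have h5 : n.choose d * (d - 1) = (d - 1) * n.choose d := Nat.mul_comm _ _
            omega
        _ = (ℓ * (d - 1) * (ℓ ^ 2) ^ (d - 1) + 1) * M₀.choose d := by ring
    omega
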